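/- Let P be the kernel of a Wasserstein contractive Markov chain (τ(P) < ∞ and τ(P^m) < 1 for some m) with invariant measure π, and assume E_p(x₀) < ∞ for some x₀ and p ≥ 1. Then for every f in the Banach space L₀ of centred measurable Lipschitz functions, Poisson's equation u - Pu = f has a unique solution u ∈ L₀, and ‖u‖_d ≤ Λ·‖f‖_d, where Λ = ∑_{n=0}^∞ τ(P^n) < ∞. -/

import Mathlib

open MeasureTheory ProbabilityTheory ENNReal Filter

noncomputable section

/-- `η` is a coupling of `μ` and `ν`. -/
def IsCoupling {X : Type*} [MeasurableSpace X] (η : Measure (X × X)) (μ ν : Measure X) : Prop :=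
  η.map Prod.fst = μ ∧ η.map Prod.snd = ν

/-- The 1-Wasserstein distance between two measures, w.r.t. the metric of `X`. -/
def wass {X : Type*} [MeasurableSpace X] [MetricSpace X] (μ ν : Measure X) : ℝ≥0∞ :=
  ⨅ η : {η : Measure (X × X) // IsCoupling η μ ν}, ∫⁻ p, edist p.1 p.2 ∂(η : Measure (X × X))

/-- The Kantorovich norm of a Markov kernel. -/
def tau {X : Type*} [MeasurableSpace X] [MetricSpace X] (K : Kernel X X) : ℝ≥0∞ :=
  ⨆ (x : X) (y : X) (_ : x ≠ y), wass (K x) (K y) / edist x y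

/-- The `p`-eccentricity of `π` at `x₀`. -/
def ecc {X : Type*} [MeasurableSpace X] [MetricSpace X] (π : Measure X) (p : ℝ) (x₀ : X) : ℝ≥0∞ :=
  ∫⁻ y, edist x₀ y ^ p ∂π

/-- The Lipschitz seminorm `‖f‖_d` (valued in `ℝ≥0∞`). -/
def elip {X : Type*} [MetricSpace X] (f : X → ℝ) : ℝ≥0∞ :=
  ⨆ (x : X) (y : X) (_ : x ≠ y), ENNReal.ofReal |f x - f y| / edist x y

/-- Membership in the Banach space `L₀` of centred measurable Lipschitz functions. -/
def MemL0 {X : Type*} [MeasurableSpace X] [MetricSpace X] (π : Measure X) (f : X → ℝ) : Prop :=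
  Measurable f ∧ (∃ L : ℝ, ∀ x y, |f x - f y| ≤ L * dist x y) ∧
    Integrable f π ∧ ∫ x, f x ∂π = 0

/-- Iterates of a Markov kernel. -/
def kpow {X : Type*} [MeasurableSpace X] (P : Kernel X X) : ℕ → Kernel X X
  | 0 => Kernel.id
  | n + 1 => (kpow P n) ∘ₖ P


section Aux

variable {X : Type*} [MeasurableSpace X] [MetricSpace X] [SecondCountableTopology X] [BorelSpace X]

lemma measurable_edist_pair : Measurable (fun p : X × X => edist p.1 p.2) := by
  exact (continuous_edist.comp (continuous_fst.prodMk continuous_snd)).measurable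

lemma wass_self (μ : Measure X) : wass μ μ = 0 := by
  have hd : Measurable (fun x : X => (x, x)) := measurable_id.prodMk measurable_id
  have hc : IsCoupling (μ.map fun x => (x, x)) μ μ := by
    constructor
    · rw [Measure.map_map measurable_fst hd]; simp [Function.comp_def]
    · rw [Measure.map_map measurable_snd hd]; simp [Function.comp_def]
  have : (wass μ μ) ≤ ∫⁻ p, edist p.1 p.2 ∂(μ.map fun x => (x, x)) :=
    iInf_le _ (⟨_, hc⟩ : {η : Measure (X × X) // IsCoupling η μ μ})
  refine le_antisymm (this.trans_eq ?_) zero_le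
  rw [lintegral_map measurable_edist_pair hd]
  simp

lemma wass_le_tau_mul (K : Kernel X X) (x y : X) :
    wass (K x) (K y) ≤ tau K * edist x y := by
  rcases eq_or_ne x y with rfl | hxy
  · simp [wass_self]
  · have h1 : wass (K x) (K y) / edist x y ≤ tau K := by
      refine le_iSup_of_le x ?_
      refine le_iSup_of_le y ?_
      exact le_iSup_of_le hxy le_rfl
    have he0 : edist x y ≠ 0 := (edist_pos.mpr hxy).ne'
    have het : edist x y ≠ ∞ := edist_ne_top x y
    calc wass (K x) (K y) = wass (K x) (K y) / edist x y * edist x y := by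
          rw [ENNReal.div_mul_cancel he0 het]
      _ ≤ tau K * edist x y := mul_le_mul_left h1 _

/-- easy direction of Kantorovich duality, `ℝ≥0∞`-valued version. -/
lemma lintegral_lip_le {μ ν : Measure X} (g : X → ℝ≥0∞) (hg : Measurable g)
    (hlip : ∀ a b, g a ≤ g b + edist a b) :
    ∫⁻ z, g z ∂μ ≤ (∫⁻ z, g z ∂ν) + wass μ ν := by
  rw [wass, ENNReal.add_iInf]
  refine le_iInf fun η => ?_
  obtain ⟨h1, h2⟩ := η.2
  have e1 : ∫⁻ z, g z ∂μ = ∫⁻ p, g p.1 ∂(η : Measure (X × X)) := by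
    have := lintegral_map hg measurable_fst (μ := (η : Measure (X × X)))
    rw [h1] at this; exact this
  have e2 : ∫⁻ z, g z ∂ν = ∫⁻ p, g p.2 ∂(η : Measure (X × X)) := by
    have := lintegral_map hg measurable_snd (μ := (η : Measure (X × X)))
    rw [h2] at this; exact this
  calc ∫⁻ z, g z ∂μ = ∫⁻ p, g p.1 ∂(η : Measure (X × X)) := e1
    _ ≤ ∫⁻ p, g p.2 + edist p.1 p.2 ∂(η : Measure (X × X)) :=
        lintegral_mono fun p => hlip p.1 p.2
    _ = (∫⁻ p, g p.2 ∂(η : Measure (X × X))) + ∫⁻ p, edist p.1 p.2 ∂(η : Measure (X × X)) :=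
        lintegral_add_left (hg.comp measurable_snd) _
    _ = (∫⁻ z, g z ∂ν) + ∫⁻ p, edist p.1 p.2 ∂(η : Measure (X × X)) := by rw [e2]

end Aux

section Aux2
set_option linter.unusedSectionVars false

variable {X : Type*} [MeasurableSpace X] [MetricSpace X] [SecondCountableTopology X] [BorelSpace X]

instance coupling_nonempty (μ ν : Measure X) [IsProbabilityMeasure μ] [IsProbabilityMeasure ν] :
    Nonempty {η : Measure (X × X) // IsCoupling η μ ν} := by
  refine ⟨⟨μ.prod ν, ?_, ?_⟩⟩
  · have := Measure.fst_prod (μ := μ) (ν := ν)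
    simpa [Measure.fst] using this
  · have := Measure.snd_prod (μ := μ) (ν := ν)
    simpa [Measure.snd] using this

/-- easy direction of Kantorovich duality, Bochner version. -/
lemma abs_integral_sub_le_wass {μ ν : Measure X} [IsProbabilityMeasure μ] [IsProbabilityMeasure ν]
    {g : X → ℝ} (hg : Measurable g) {C : ℝ≥0∞} (hC : C ≠ ∞)
    (hlip : ∀ a b, ENNReal.ofReal |g a - g b| ≤ C * edist a b)
    (hμ : Integrable g μ) (hν : Integrable g ν) :
    ENNReal.ofReal |∫ z, g z ∂μ - ∫ z, g z ∂ν| ≤ C * wass μ ν := by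
  have key : ∀ η : {η : Measure (X × X) // IsCoupling η μ ν},
      ENNReal.ofReal |∫ z, g z ∂μ - ∫ z, g z ∂ν| ≤
        C * ∫⁻ p, edist p.1 p.2 ∂(η : Measure (X × X)) := by
    rintro ⟨η, h1, h2⟩
    have hg1 : Integrable (fun p : X × X => g p.1) η := by
      have h' : Integrable g (Measure.map Prod.fst η) := h1.symm ▸ hμ
      simpa [Function.comp_def] using
        (integrable_map_measure hg.aestronglyMeasurable measurable_fst.aemeasurable).mp h'
    have hg2 : Integrable (fun p : X × X => g p.2) η := by
      have h' : Integrable g (Measure.map Prod.snd η) := h2.symm ▸ hν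
      simpa [Function.comp_def] using
        (integrable_map_measure hg.aestronglyMeasurable measurable_snd.aemeasurable).mp h'
    have e1 : ∫ z, g z ∂μ = ∫ p, g p.1 ∂η := by
      have := integral_map (μ := η) measurable_fst.aemeasurable hg.aestronglyMeasurable
      rw [h1] at this; exact this
    have e2 : ∫ z, g z ∂ν = ∫ p, g p.2 ∂η := by
      have := integral_map (μ := η) measurable_snd.aemeasurable hg.aestronglyMeasurable
      rw [h2] at this; exact this
    rw [e1, e2, ← integral_sub hg1 hg2]
    calc ENNReal.ofReal |∫ p, (g p.1 - g p.2) ∂η|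
        ≤ ENNReal.ofReal (∫ p, |g p.1 - g p.2| ∂η) := by
          refine ENNReal.ofReal_le_ofReal ?_
          simpa [Real.norm_eq_abs] using
            norm_integral_le_integral_norm (fun p : X × X => g p.1 - g p.2) (μ := η)
      _ = ∫⁻ p, ENNReal.ofReal |g p.1 - g p.2| ∂η :=
          ofReal_integral_eq_lintegral_ofReal (hg1.sub hg2).abs
            (Eventually.of_forall fun p => abs_nonneg _)
      _ ≤ ∫⁻ p, C * edist p.1 p.2 ∂η := lintegral_mono fun p => hlip p.1 p.2
      _ = C * ∫⁻ p, edist p.1 p.2 ∂η := lintegral_const_mul C measurable_edist_pair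
  rw [wass, ENNReal.mul_iInf' (by simp [hC]) (fun _ => inferInstance)]
  exact le_iInf key

end Aux2

section Aux3
set_option linter.unusedSectionVars false

variable {X : Type*} [MeasurableSpace X] [MetricSpace X] [SecondCountableTopology X] [BorelSpace X]
variable (P : Kernel X X) [IsMarkovKernel P]

instance kpow_markov (n : ℕ) : IsMarkovKernel (kpow P n) := by
  induction n with
  | zero => rw [kpow]; infer_instance
  | succ n ih => rw [kpow]; infer_instance

lemma kpow_comm (n : ℕ) : kpow P n ∘ₖ P = P ∘ₖ kpow P n := by
  induction n with
  | zero => rw [kpow, Kernel.id_comp, Kernel.comp_id]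
  | succ n ih =>
      show (kpow P n ∘ₖ P) ∘ₖ P = P ∘ₖ (kpow P n ∘ₖ P)
      rw [ih, Kernel.comp_assoc, ih]

lemma kpow_add (a b : ℕ) : kpow P (a + b) = kpow P a ∘ₖ kpow P b := by
  induction b with
  | zero => rw [Nat.add_zero, kpow, Kernel.comp_id]
  | succ b ih =>
      show kpow P (a + b) ∘ₖ P = kpow P a ∘ₖ (kpow P b ∘ₖ P)
      rw [ih, Kernel.comp_assoc]

lemma kpow_apply_succ (n : ℕ) (x : X) : kpow P (n + 1) x = (P x).bind (kpow P n) :=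
  Kernel.comp_apply _ _ _

variable (π : Measure X) [IsProbabilityMeasure π]

lemma bind_kpow_inv (hinv : π.bind P = π) (n : ℕ) : π.bind (kpow P n) = π := by
  induction n with
  | zero =>
      have : ⇑(kpow P 0) = fun x : X => Measure.dirac x := funext fun x => by
        rw [kpow]; exact Kernel.id_apply x
      rw [this]; exact Measure.bind_dirac
  | succ n ih =>
      have : ⇑(kpow P (n + 1)) = fun x : X => (P x).bind (kpow P n) :=
        funext fun x => kpow_apply_succ P n x
      rw [this, ← Measure.bind_bind P.measurable.aemeasurable (kpow P n).measurable.aemeasurable, hinv, ih]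

variable (x₀ : X)

lemma meas_edist0 : Measurable fun y : X => edist x₀ y :=
  (continuous_const.edist continuous_id).measurable

lemma edist_lip (a b : X) : edist x₀ a ≤ edist x₀ b + edist a b := by
  calc edist x₀ a ≤ edist x₀ b + edist b a := edist_triangle _ _ _
    _ = edist x₀ b + edist a b := by rw [edist_comm a b]

lemma measurable_mom (K : Kernel X X) [IsSFiniteKernel K] : Measurable fun x => ∫⁻ y, edist x₀ y ∂K x :=
  Measurable.lintegral_kernel_prod_right
    (f := fun _ y => edist x₀ y) ((meas_edist0 x₀).comp measurable_snd)

lemma mom_pi_lt_top {p : ℝ} (hp : 1 ≤ p) (hE : ecc π p x₀ < ∞) :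
    ∫⁻ y, edist x₀ y ∂π < ∞ := by
  have hb : ∀ y : X, edist x₀ y ≤ 1 + edist x₀ y ^ p := by
    intro y
    rcases le_total (edist x₀ y) 1 with h | h
    · exact h.trans (le_add_of_nonneg_right zero_le)
    · have h1 : edist x₀ y ≤ edist x₀ y ^ p := by
        calc edist x₀ y = edist x₀ y ^ (1 : ℝ) := (ENNReal.rpow_one _).symm
          _ ≤ edist x₀ y ^ p := ENNReal.rpow_le_rpow_of_exponent_le h hp
      exact h1.trans (le_add_of_nonneg_left zero_le)
  calc ∫⁻ y, edist x₀ y ∂π ≤ ∫⁻ y, (1 + edist x₀ y ^ p) ∂π := lintegral_mono hb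
    _ = (∫⁻ _, (1 : ℝ≥0∞) ∂π) + ∫⁻ y, edist x₀ y ^ p ∂π := lintegral_add_left measurable_const _
    _ = 1 + ecc π p x₀ := by rw [lintegral_one, measure_univ, ecc]
    _ < ∞ := by
        rw [ENNReal.add_lt_top]
        exact ⟨ENNReal.one_lt_top, hE⟩

lemma mom_lip (htau : tau P < ∞) (x y : X) :
    ∫⁻ z, edist x₀ z ∂P x ≤ (∫⁻ z, edist x₀ z ∂P y) + tau P * edist x y := by
  refine (lintegral_lip_le (μ := P x) (ν := P y) _ (meas_edist0 x₀) (edist_lip x₀)).trans ?_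
  exact add_le_add le_rfl (wass_le_tau_mul P x y)

lemma mom_P_lt_top (hinv : π.bind P = π) {p : ℝ} (hp : 1 ≤ p) (hE : ecc π p x₀ < ∞)
    (htau : tau P < ∞) (x : X) : ∫⁻ z, edist x₀ z ∂P x < ∞ := by
  have hbind : ∫⁻ y, (∫⁻ z, edist x₀ z ∂P y) ∂π = ∫⁻ z, edist x₀ z ∂π := by
    rw [← Measure.lintegral_bind P.measurable.aemeasurable (meas_edist0 x₀).aemeasurable, hinv]
  have hae : ∀ᵐ y ∂π, (∫⁻ z, edist x₀ z ∂P y) < ∞ := by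
    refine ae_lt_top (measurable_mom x₀ P) ?_
    rw [hbind]
    exact (mom_pi_lt_top π x₀ hp hE).ne
  obtain ⟨y, hy⟩ := hae.exists
  calc ∫⁻ z, edist x₀ z ∂P x ≤ (∫⁻ z, edist x₀ z ∂P y) + tau P * edist x y :=
        mom_lip P x₀ htau x y
    _ < ∞ := by
        rw [ENNReal.add_lt_top]
        exact ⟨hy, ENNReal.mul_lt_top htau (edist_lt_top x y)⟩

lemma mom_kpow_bound (hinv : π.bind P = π) {p : ℝ} (hp : 1 ≤ p) (hE : ecc π p x₀ < ∞)
    (htau : tau P < ∞) (n : ℕ) :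
    ∃ A B : ℝ≥0∞, A ≠ ∞ ∧ B ≠ ∞ ∧
      ∀ x, ∫⁻ z, edist x₀ z ∂(kpow P n x) ≤ A + B * edist x₀ x := by
  induction n with
  | zero =>
      refine ⟨0, 1, by simp, by simp, fun x => ?_⟩
      rw [kpow, Kernel.id_apply, lintegral_dirac' x (meas_edist0 x₀)]
      simp
  | succ n ih =>
      obtain ⟨A, B, hA, hB, hbd⟩ := ih
      refine ⟨A + B * (∫⁻ z, edist x₀ z ∂P x₀), B * tau P, ?_, ?_, fun x => ?_⟩
      · exact ENNReal.add_ne_top.mpr ⟨hA, ENNReal.mul_ne_top hB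
          (mom_P_lt_top P π x₀ hinv hp hE htau x₀).ne⟩
      · exact ENNReal.mul_ne_top hB htau.ne
      · rw [kpow_apply_succ,
          Measure.lintegral_bind (kpow P n).measurable.aemeasurable (meas_edist0 x₀).aemeasurable]
        calc ∫⁻ z, (∫⁻ w, edist x₀ w ∂(kpow P n z)) ∂P x
            ≤ ∫⁻ z, (A + B * edist x₀ z) ∂P x := lintegral_mono fun z => hbd z
          _ = A + B * ∫⁻ z, edist x₀ z ∂P x := by
              rw [lintegral_add_left measurable_const,
                lintegral_const_mul B (meas_edist0 x₀), lintegral_const,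
                measure_univ, mul_one]
          _ ≤ A + B * ((∫⁻ z, edist x₀ z ∂P x₀) + tau P * edist x x₀) := by
              gcongr
              exact mom_lip P x₀ htau x x₀
          _ = A + B * (∫⁻ z, edist x₀ z ∂P x₀) + B * tau P * edist x₀ x := by
              rw [edist_comm x x₀]; ring
  
lemma mom_kpow_lt_top (hinv : π.bind P = π) {p : ℝ} (hp : 1 ≤ p) (hE : ecc π p x₀ < ∞)
    (htau : tau P < ∞) (n : ℕ) (x : X) : ∫⁻ z, edist x₀ z ∂(kpow P n x) < ∞ := by
  obtain ⟨A, B, hA, hB, hbd⟩ := mom_kpow_bound P π x₀ hinv hp hE htau n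
  refine (hbd x).trans_lt ?_
  rw [ENNReal.add_lt_top]
  exact ⟨hA.lt_top, ENNReal.mul_lt_top hB.lt_top (edist_lt_top x₀ x)⟩

lemma integrable_of_lip {μ : Measure X} [IsProbabilityMeasure μ] {g : X → ℝ} {L : ℝ}
    (hg : Measurable g) (hlip : ∀ a b, |g a - g b| ≤ L * dist a b)
    (hmom : ∫⁻ y, edist x₀ y ∂μ < ∞) : Integrable g μ := by
  have hdist : Integrable (fun y => dist x₀ y) μ := by
    refine ⟨(measurable_const.dist measurable_id).aestronglyMeasurable, ?_⟩
    rw [HasFiniteIntegral]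
    have : ∀ y : X, ‖dist x₀ y‖ₑ = edist x₀ y := fun y => by
      rw [Real.enorm_eq_ofReal dist_nonneg, edist_dist]
    simpa only [this] using hmom
  have hbound : Integrable (fun y => |g x₀| + |L| * dist x₀ y) μ :=
    (integrable_const _).add (hdist.const_mul _)
  refine hbound.mono' hg.aestronglyMeasurable (Eventually.of_forall fun y => ?_)
  rw [Real.norm_eq_abs]
  calc |g y| ≤ |g x₀| + |g y - g x₀| := by
        have := abs_sub_abs_le_abs_sub (g y) (g x₀); linarith [abs_nonneg (g y - g x₀)]
    _ ≤ |g x₀| + |L| * dist x₀ y := by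
        have h1 := hlip y x₀
        have h2 : L * dist y x₀ ≤ |L| * dist y x₀ :=
          mul_le_mul_of_nonneg_right (le_abs_self L) dist_nonneg
        rw [dist_comm x₀ y]
        linarith

end Aux3

section Aux4
set_option linter.unusedSectionVars false

variable {X : Type*} [MeasurableSpace X] [MetricSpace X] [SecondCountableTopology X] [BorelSpace X]

lemma bind_eq_snd_compProd (μ : Measure X) [SFinite μ] (K : Kernel X X) [IsMarkovKernel K] :
    μ.bind K = (μ ⊗ₘ K).snd := by
  ext s hs
  rw [Measure.bind_apply hs K.measurable.aemeasurable, Measure.snd_apply hs,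
    Measure.compProd_apply (measurable_snd hs)]
  rfl

lemma integral_bind_meas (μ : Measure X) [IsProbabilityMeasure μ] (K : Kernel X X)
    [IsMarkovKernel K] {g : X → ℝ} (hg : Measurable g) (hint : Integrable g (μ.bind K)) :
    ∫ y, g y ∂(μ.bind K) = ∫ x, ∫ y, g y ∂(K x) ∂μ := by
  rw [bind_eq_snd_compProd] at hint ⊢
  have hmap : (μ ⊗ₘ K).snd = (μ ⊗ₘ K).map Prod.snd := rfl
  have e1 : ∫ y, g y ∂((μ ⊗ₘ K).map Prod.snd) = ∫ p : X × X, g p.2 ∂(μ ⊗ₘ K) :=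
    integral_map measurable_snd.aemeasurable hg.aestronglyMeasurable
  have hint2 : Integrable (fun p : X × X => g p.2) (μ ⊗ₘ K) := by
    rw [hmap] at hint
    simpa [Function.comp_def] using
      (integrable_map_measure hg.aestronglyMeasurable measurable_snd.aemeasurable).mp hint
  rw [hmap, e1]
  exact Measure.integral_compProd hint2

lemma kpow_one (P : Kernel X X) : kpow P 1 = P := by
  show Kernel.id ∘ₖ P = P
  rw [Kernel.id_comp]

variable (P : Kernel X X) [IsMarkovKernel P] (π : Measure X) [IsProbabilityMeasure π] (x₀ : X)

/-- `Tn P n g = Pⁿ g`. -/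
def Tn (n : ℕ) (g : X → ℝ) : X → ℝ := fun x => ∫ y, g y ∂(kpow P n x)

lemma Tn_measurable (n : ℕ) {g : X → ℝ} (hg : Measurable g) : Measurable (Tn P n g) := by
  have : StronglyMeasurable fun p : X × X => g p.2 :=
    (hg.comp measurable_snd).stronglyMeasurable
  exact (this.integral_kernel_prod_right' (κ := kpow P n)).measurable

variable {P π}

lemma integrable_kpow (hinv : π.bind P = π) {p : ℝ} (hp : 1 ≤ p) (hE : ecc π p x₀ < ∞)
    (htau : tau P < ∞) {g : X → ℝ} {L : ℝ} (hg : Measurable g)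
    (hlip : ∀ a b, |g a - g b| ≤ L * dist a b) (n : ℕ) (x : X) :
    Integrable g (kpow P n x) :=
  integrable_of_lip x₀ hg hlip (mom_kpow_lt_top P π x₀ hinv hp hE htau n x)

lemma Tn_add (hinv : π.bind P = π) {p : ℝ} (hp : 1 ≤ p) (hE : ecc π p x₀ < ∞)
    (htau : tau P < ∞) {g : X → ℝ} {L : ℝ} (hg : Measurable g)
    (hlip : ∀ a b, |g a - g b| ≤ L * dist a b) (n k : ℕ) (x : X) :
    Tn P (n + k) g x = ∫ z, Tn P n g z ∂(kpow P k x) := by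
  have hker : kpow P (n + k) x = (kpow P k x).bind (kpow P n) := by
    rw [kpow_add P n k]; rfl
  rw [Tn, hker]
  exact integral_bind_meas (kpow P k x) (kpow P n) hg
    (by rw [← hker]; exact integrable_kpow x₀ hinv hp hE htau hg hlip _ x)

lemma Tn_succ (hinv : π.bind P = π) {p : ℝ} (hp : 1 ≤ p) (hE : ecc π p x₀ < ∞)
    (htau : tau P < ∞) {g : X → ℝ} {L : ℝ} (hg : Measurable g)
    (hlip : ∀ a b, |g a - g b| ≤ L * dist a b) (n : ℕ) (x : X) :
    Tn P (n + 1) g x = ∫ z, Tn P n g z ∂(P x) := by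
  rw [Tn_add x₀ hinv hp hE htau hg hlip n 1 x, kpow_one]

lemma Tn_integral_pi (hinv : π.bind P = π) (n : ℕ) {g : X → ℝ} (hg : Measurable g)
    (hint : Integrable g π) : ∫ x, Tn P n g x ∂π = ∫ x, g x ∂π := by
  have hb := bind_kpow_inv P π hinv n
  have := integral_bind_meas π (kpow P n) hg (by rw [hb]; exact hint)
  rw [hb] at this
  exact this.symm

/-- the ENNReal Lipschitz bound for `Tn`. -/
lemma Tn_elip (n : ℕ) {g : X → ℝ} (hg : Measurable g) {C : ℝ≥0∞} (hC : C ≠ ∞)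
    (hlip : ∀ a b, ENNReal.ofReal |g a - g b| ≤ C * edist a b)
    (hint : ∀ x, Integrable g (kpow P n x)) (x y : X) :
    ENNReal.ofReal |Tn P n g x - Tn P n g y| ≤ C * tau (kpow P n) * edist x y := by
  calc ENNReal.ofReal |Tn P n g x - Tn P n g y|
      ≤ C * wass (kpow P n x) (kpow P n y) :=
        abs_integral_sub_le_wass hg hC hlip (hint x) (hint y)
    _ ≤ C * (tau (kpow P n) * edist x y) := by
        gcongr
        exact wass_le_tau_mul _ x y
    _ = C * tau (kpow P n) * edist x y := by ring

lemma real_lip_of_ennreal {a : ℝ} (ha : 0 ≤ a) {D : ℝ≥0∞} (hD : D ≠ ∞) {x y : X}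
    (h : ENNReal.ofReal a ≤ D * edist x y) : a ≤ D.toReal * dist x y := by
  have h2 : (ENNReal.ofReal a).toReal ≤ (D * edist x y).toReal := by
    refine ENNReal.toReal_mono ?_ h
    exact ENNReal.mul_ne_top hD (edist_ne_top x y)
  rw [ENNReal.toReal_ofReal ha, ENNReal.toReal_mul] at h2
  rwa [edist_dist, ENNReal.toReal_ofReal dist_nonneg] at h2

end Aux4

section Aux5

lemma summable_pow_nat_div {q : ℝ} (hq0 : 0 < q) (hq1 : q < 1) {m : ℕ} (hm : 0 < m) :
    Summable fun n : ℕ => q ^ (n / m) := by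
  have hr0 : (0 : ℝ) < q ^ (1 / (m : ℝ)) := Real.rpow_pos_of_pos hq0 _
  have hr1 : q ^ (1 / (m : ℝ)) < 1 :=
    Real.rpow_lt_one hq0.le hq1 (by positivity)
  have hsum : Summable fun n : ℕ => q⁻¹ * (q ^ (1 / (m : ℝ))) ^ n :=
    (summable_geometric_of_lt_one hr0.le hr1).mul_left _
  refine hsum.of_nonneg_of_le (fun n => by positivity) fun n => ?_
  have key : ((n : ℝ) / m - 1) ≤ ((n / m : ℕ) : ℝ) := by
    have h1 : (n : ℕ) ≤ m * (n / m) + m := by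
      have := Nat.mod_add_div n m
      have h2 : n % m < m := Nat.mod_lt _ hm
      omega
    have h1' : (n : ℝ) ≤ m * ((n / m : ℕ) : ℝ) + m := by exact_mod_cast h1
    have hm' : (0 : ℝ) < m := by exact_mod_cast hm
    rw [div_sub_one hm'.ne', div_le_iff₀ hm']
    nlinarith
  calc q ^ (n / m) = q ^ (((n / m : ℕ) : ℝ)) := by
        rw [Real.rpow_natCast]
    _ ≤ q ^ ((n : ℝ) / m - 1) :=
        Real.rpow_le_rpow_of_exponent_ge hq0 hq1.le key
    _ = q⁻¹ * (q ^ (1 / (m : ℝ))) ^ n := by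
        rw [Real.rpow_sub hq0, Real.rpow_one, ← Real.rpow_natCast (q ^ (1 / (m : ℝ))) n,
          ← Real.rpow_mul hq0.le]
        rw [div_eq_mul_inv, mul_comm]
        congr 1
        rw [mul_comm]
        congr 1
        rw [div_eq_mul_inv]; ring
    _ ≤ q⁻¹ * (q ^ (1 / (m : ℝ))) ^ n := le_rfl

lemma summable_pow_nat_div' {q : ℝ} (hq0 : 0 ≤ q) (hq1 : q < 1) {m : ℕ} (hm : 0 < m) :
    Summable fun n : ℕ => q ^ (n / m) := by
  set q' : ℝ := max q 2⁻¹ with hq'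
  have hq'0 : (0 : ℝ) < q' := lt_max_of_lt_right (by norm_num)
  have hq'1 : q' < 1 := max_lt hq1 (by norm_num)
  refine (summable_pow_nat_div hq'0 hq'1 hm).of_nonneg_of_le
    (fun n => by positivity) fun n => ?_
  exact pow_le_pow_left₀ hq0 (le_max_left _ _) _

lemma ofReal_lip {X : Type*} [MetricSpace X] {g : X → ℝ} {Lg : ℝ} (hLg : 0 ≤ Lg)
    (hlip : ∀ a b, |g a - g b| ≤ Lg * dist a b) (a b : X) :
    ENNReal.ofReal |g a - g b| ≤ ENNReal.ofReal Lg * edist a b := by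
  rw [edist_dist, ← ENNReal.ofReal_mul hLg]
  exact ENNReal.ofReal_le_ofReal (hlip a b)

end Aux5


/-- for a Wasserstein contractive kernel `P` with invariant measure `π`
and finite eccentricity, Poisson's equation `u - Pu = f` has a unique solution `u ∈ L₀`
for every `f ∈ L₀`, and `‖u‖_d ≤ Λ ‖f‖_d` with `Λ = ∑ₙ τ(Pⁿ)`. -/
theorem poisson_solution_lipschitz {X : Type*} [MeasurableSpace X] [MetricSpace X]
    [PolishSpace X] [BorelSpace X]
    (π : Measure X) [IsProbabilityMeasure π]
    (P : Kernel X X) [IsMarkovKernel P] (hinv : π.bind P = π)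
    (htau : tau P < ∞) (m : ℕ) (hm : 0 < m) (hcontr : tau (kpow P m) < 1)
    (p : ℝ) (hp : 1 ≤ p) (x₀ : X) (hE : ecc π p x₀ < ∞)
    (f : X → ℝ) (hf : MemL0 π f) :
    ∃ u : X → ℝ,
      (MemL0 π u ∧ ∀ x, u x - ∫ y, u y ∂(P x) = f x) ∧
      elip u ≤ (∑' n : ℕ, tau (kpow P n)) * elip f ∧
      ∀ v : X → ℝ, (MemL0 π v ∧ ∀ x, v x - ∫ y, v y ∂(P x) = f x) → v = u := by
  classical
  obtain ⟨hfm, ⟨L0, hL0⟩, hfint, hfzero⟩ := hf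
  set L : ℝ := |L0| with hLdef
  have hLnn : 0 ≤ L := abs_nonneg _
  have hlipf : ∀ a b, |f a - f b| ≤ L * dist a b := fun a b =>
    (hL0 a b).trans (mul_le_mul_of_nonneg_right (le_abs_self _) dist_nonneg)
  have htaune : tau P ≠ ∞ := htau.ne
  set t : ℝ := (tau P).toReal with ht_def
  have htnn : 0 ≤ t := ENNReal.toReal_nonneg
  have hθtop : tau (kpow P m) ≠ ∞ := (hcontr.trans ENNReal.one_lt_top).ne
  set θ : ℝ := (tau (kpow P m)).toReal with hθ_def
  have hθnn : 0 ≤ θ := ENNReal.toReal_nonneg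
  have hθ1 : θ < 1 := by
    have h := (ENNReal.toReal_lt_toReal hθtop (by simp : (1 : ℝ≥0∞) ≠ ∞)).mpr hcontr
    simpa using h
  have hmomπ : ∫⁻ y, edist x₀ y ∂π < ∞ := mom_pi_lt_top π x₀ hp hE
  have hmom1 : ∀ x : X, ∫⁻ z, edist x₀ z ∂(P x) < ∞ := mom_P_lt_top P π x₀ hinv hp hE htau
  -- `Tn P 0` is the identity
  have hF0 : ∀ (g : X → ℝ), ∀ x, Tn P 0 g x = g x := by
    intro g x
    show ∫ y, g y ∂(kpow P 0 x) = g x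
    rw [kpow, Kernel.id_apply]
    exact integral_dirac g x
  -- one-step Lipschitz ladder
  have step1 : ∀ (g : X → ℝ) (Lg : ℝ), 0 ≤ Lg → Measurable g →
      (∀ a b, |g a - g b| ≤ Lg * dist a b) → ∀ n a b,
      |Tn P n g a - Tn P n g b| ≤ Lg * t ^ n * dist a b := by
    intro g Lg hLg hg hlip n
    induction n with
    | zero =>
        intro a b
        rw [hF0 g, hF0 g]
        simpa using hlip a b
    | succ n ih =>
        intro a b
        have hTm : Measurable (Tn P n g) := Tn_measurable P n hg
        have hTi : ∀ x, Integrable (Tn P n g) (P x) := fun x =>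
          integrable_of_lip x₀ hTm ih (hmom1 x)
        have hofr := ofReal_lip (by positivity : (0 : ℝ) ≤ Lg * t ^ n) ih
        have key : ENNReal.ofReal |Tn P (n + 1) g a - Tn P (n + 1) g b| ≤
            (ENNReal.ofReal (Lg * t ^ n) * tau P) * edist a b := by
          rw [Tn_succ x₀ hinv hp hE htau hg hlip n a, Tn_succ x₀ hinv hp hE htau hg hlip n b]
          calc ENNReal.ofReal |(∫ z, Tn P n g z ∂(P a)) - ∫ z, Tn P n g z ∂(P b)|
              ≤ ENNReal.ofReal (Lg * t ^ n) * wass (P a) (P b) :=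
                abs_integral_sub_le_wass hTm ENNReal.ofReal_ne_top hofr (hTi a) (hTi b)
            _ ≤ ENNReal.ofReal (Lg * t ^ n) * (tau P * edist a b) := by
                gcongr
                exact wass_le_tau_mul P a b
            _ = (ENNReal.ofReal (Lg * t ^ n) * tau P) * edist a b := by ring
        have h2 := real_lip_of_ennreal (abs_nonneg _)
          (ENNReal.mul_ne_top ENNReal.ofReal_ne_top htaune) key
        rw [ENNReal.toReal_mul, ENNReal.toReal_ofReal (by positivity)] at h2
        have e : Lg * t ^ (n + 1) * dist a b = Lg * t ^ n * (tau P).toReal * dist a b := by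
          rw [← ht_def]; ring
        rw [e]
        exact h2
  -- `m`-block Lipschitz ladder
  have ladder : ∀ (g : X → ℝ) (Lg : ℝ), 0 ≤ Lg → Measurable g →
      (∀ a b, |g a - g b| ≤ Lg * dist a b) → ∀ j r a b,
      |Tn P (r + m * j) g a - Tn P (r + m * j) g b| ≤ Lg * t ^ r * θ ^ j * dist a b := by
    intro g Lg hLg hg hlip j
    induction j with
    | zero =>
        intro r a b
        simpa using step1 g Lg hLg hg hlip r a b
    | succ j ih =>
        intro r a b
        have hidx : r + m * (j + 1) = (r + m * j) + m := by ring
        have hg'meas : Measurable (Tn P (r + m * j) g) := Tn_measurable P _ hg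
        have hg'lip : ∀ a b, |Tn P (r + m * j) g a - Tn P (r + m * j) g b| ≤
            (Lg * t ^ r * θ ^ j) * dist a b := ih r
        have hg'int : ∀ x, Integrable (Tn P (r + m * j) g) (kpow P m x) := fun x =>
          integrable_of_lip x₀ hg'meas hg'lip (mom_kpow_lt_top P π x₀ hinv hp hE htau m x)
        have hTadd : ∀ x, Tn P (r + m * (j + 1)) g x =
            ∫ z, Tn P (r + m * j) g z ∂(kpow P m x) := by
          intro x
          rw [hidx]
          exact Tn_add x₀ hinv hp hE htau hg hlip (r + m * j) m x
        have hofr := ofReal_lip (by positivity : (0 : ℝ) ≤ Lg * t ^ r * θ ^ j) hg'lip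
        have key : ENNReal.ofReal |Tn P (r + m * (j + 1)) g a - Tn P (r + m * (j + 1)) g b| ≤
            (ENNReal.ofReal (Lg * t ^ r * θ ^ j) * tau (kpow P m)) * edist a b := by
          rw [hTadd a, hTadd b]
          calc ENNReal.ofReal |(∫ z, Tn P (r + m * j) g z ∂(kpow P m a)) -
                ∫ z, Tn P (r + m * j) g z ∂(kpow P m b)|
              ≤ ENNReal.ofReal (Lg * t ^ r * θ ^ j) * wass (kpow P m a) (kpow P m b) :=
                abs_integral_sub_le_wass hg'meas ENNReal.ofReal_ne_top hofr (hg'int a) (hg'int b)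
            _ ≤ ENNReal.ofReal (Lg * t ^ r * θ ^ j) * (tau (kpow P m) * edist a b) := by
                gcongr
                exact wass_le_tau_mul _ a b
            _ = (ENNReal.ofReal (Lg * t ^ r * θ ^ j) * tau (kpow P m)) * edist a b := by ring
        have h2 := real_lip_of_ennreal (abs_nonneg _)
          (ENNReal.mul_ne_top ENNReal.ofReal_ne_top hθtop) key
        rw [ENNReal.toReal_mul, ENNReal.toReal_ofReal (by positivity)] at h2
        have e : Lg * t ^ r * θ ^ (j + 1) * dist a b =
            Lg * t ^ r * θ ^ j * (tau (kpow P m)).toReal * dist a b := by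
          rw [← hθ_def]; ring
        rw [e]
        exact h2
  have lipTn : ∀ (g : X → ℝ) (Lg : ℝ), 0 ≤ Lg → Measurable g →
      (∀ a b, |g a - g b| ≤ Lg * dist a b) → ∀ n a b,
      |Tn P n g a - Tn P n g b| ≤ Lg * t ^ (n % m) * θ ^ (n / m) * dist a b := by
    intro g Lg h0 hgm hl n a b
    have := ladder g Lg h0 hgm hl (n / m) (n % m) a b
    rwa [Nat.mod_add_div n m] at this
  -- summability of the Lipschitz constants
  have hcsum0 : Summable (fun n : ℕ => t ^ (n % m) * θ ^ (n / m)) := by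
    have hb : ∀ n : ℕ, t ^ (n % m) * θ ^ (n / m) ≤ (max 1 t) ^ m * θ ^ (n / m) := by
      intro n
      have h1 : t ^ (n % m) ≤ (max 1 t) ^ (n % m) :=
        pow_le_pow_left₀ htnn (le_max_right _ _) _
      have h2 : (max 1 t) ^ (n % m) ≤ (max 1 t) ^ m :=
        pow_le_pow_right₀ (le_max_left _ _) (Nat.mod_lt _ hm).le
      have hθp : (0 : ℝ) ≤ θ ^ (n / m) := by positivity
      have := mul_le_mul_of_nonneg_right (h1.trans h2) hθp
      linarith
    exact Summable.of_nonneg_of_le (fun n => by positivity) hb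
      ((summable_pow_nat_div' hθnn hθ1 hm).mul_left _)
  -- the iterates of `f`
  set F : ℕ → X → ℝ := fun n => Tn P n f with hFdef
  set c : ℕ → ℝ := fun n => L * (t ^ (n % m) * θ ^ (n / m)) with hcdef
  have hcnn : ∀ n, 0 ≤ c n := fun n =>
    mul_nonneg hLnn (mul_nonneg (pow_nonneg htnn _) (pow_nonneg hθnn _))
  have hcsum : Summable c := hcsum0.mul_left L
  have hlipF : ∀ n a b, |F n a - F n b| ≤ c n * dist a b := by
    intro n a b
    have h := lipTn f L hLnn hfm hlipf n a b
    have e : c n * dist a b = L * t ^ (n % m) * θ ^ (n / m) * dist a b := by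
      rw [hcdef]; ring
    rw [e]
    exact h
  have hFmeas : ∀ n, Measurable (F n) := fun n => Tn_measurable P n hfm
  have hFintπ : ∀ n, Integrable (F n) π := fun n =>
    integrable_of_lip x₀ (hFmeas n) (hlipF n) hmomπ
  have hFpi : ∀ n, ∫ x, F n x ∂π = 0 := by
    intro n
    have := Tn_integral_pi hinv n hfm hfint
    rw [hFdef]
    rw [this, hfzero]
  -- distance integrability
  have hdl : ∀ a b : X, |dist a x₀ - dist b x₀| ≤ 1 * dist a b := fun a b => by
    rw [one_mul]; exact abs_dist_sub_le a b x₀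
  have hdmeas : Measurable fun y : X => dist y x₀ := measurable_id.dist measurable_const
  set Mπ : ℝ := ∫ y, dist y x₀ ∂π with hMπdef
  have hdistπ : Integrable (fun y => dist y x₀) π := integrable_of_lip x₀ hdmeas hdl hmomπ
  have hMπnn : 0 ≤ Mπ := integral_nonneg fun y => dist_nonneg
  -- pointwise bound on `F n`
  have hFbd : ∀ n x, |F n x| ≤ c n * (dist x x₀ + Mπ) := by
    intro n x
    have h1 : F n x = ∫ y, (F n x - F n y) ∂π := by
      rw [integral_sub (integrable_const _) (hFintπ n), integral_const, hFpi n]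
      simp [measure_univ]
    rw [h1]
    calc |∫ y, (F n x - F n y) ∂π| ≤ ∫ y, |F n x - F n y| ∂π := by
          simpa [Real.norm_eq_abs] using
            norm_integral_le_integral_norm (μ := π) (fun y => F n x - F n y)
      _ ≤ ∫ y, c n * (dist x x₀ + dist y x₀) ∂π := by
          refine integral_mono ((integrable_const _).sub (hFintπ n)).abs
            (((integrable_const _).add hdistπ).const_mul _) fun y => ?_
          calc |F n x - F n y| ≤ c n * dist x y := hlipF n x y
            _ ≤ c n * (dist x x₀ + dist y x₀) := by
                refine mul_le_mul_of_nonneg_left ?_ (hcnn n)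
                calc dist x y ≤ dist x x₀ + dist x₀ y := dist_triangle _ _ _
                  _ = dist x x₀ + dist y x₀ := by rw [dist_comm x₀ y]
      _ = c n * (dist x x₀ + Mπ) := by
          rw [integral_const_mul _ _, integral_add (integrable_const _) hdistπ, integral_const]
          simp [measure_univ, hMπdef]
  have hFabs_sum : ∀ x, Summable fun n => |F n x| := fun x =>
    Summable.of_nonneg_of_le (fun n => abs_nonneg _) (fun n => hFbd n x)
      (hcsum.mul_right _)
  have hFsum : ∀ x, Summable fun n => F n x := fun x => (hFabs_sum x).of_abs
  -- the solution
  set u : X → ℝ := fun x => ∑' n, F n x with hu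
  set Sc : ℝ := ∑' n, c n with hScdef
  have hScnn : 0 ≤ Sc := tsum_nonneg hcnn
  have hulip : ∀ a b, |u a - u b| ≤ Sc * dist a b := by
    intro a b
    have habs : Summable fun n => |F n a - F n b| :=
      Summable.of_nonneg_of_le (fun n => abs_nonneg _) (fun n => hlipF n a b)
        (hcsum.mul_right _)
    have hsub : u a - u b = ∑' n, (F n a - F n b) := ((hFsum a).tsum_sub (hFsum b)).symm
    rw [hsub]
    calc |∑' n, (F n a - F n b)| ≤ ∑' n, |F n a - F n b| := by
          simpa [Real.norm_eq_abs] using norm_tsum_le_tsum_norm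
            (by simpa [Real.norm_eq_abs] using habs :
              Summable fun n => ‖F n a - F n b‖)
      _ ≤ ∑' n, c n * dist a b :=
          Summable.tsum_le_tsum (fun n => hlipF n a b) habs (hcsum.mul_right _)
      _ = Sc * dist a b := by rw [hScdef, tsum_mul_right]
  have humeas : Measurable u := by
    refine measurable_of_tendsto_metrizable
      (fun N => Finset.measurable_sum (Finset.range N) (fun n _ => hFmeas n))
      (tendsto_pi_nhds.mpr fun x => ?_)
    exact (hFsum x).hasSum.tendsto_sum_nat
  have huint : Integrable u π := integrable_of_lip x₀ humeas hulip hmomπ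
  -- exchanging sum and integral
  have tsum_int : ∀ (μ : Measure X), IsProbabilityMeasure μ →
      (∫⁻ y, edist x₀ y ∂μ) < ∞ → ∫ x, u x ∂μ = ∑' n, ∫ x, F n x ∂μ := by
    intro μ hμ hmom
    haveI := hμ
    have hDμ : Integrable (fun y => dist y x₀) μ := integrable_of_lip x₀ hdmeas hdl hmom
    set Aμ : ℝ := (∫ x, dist x x₀ ∂μ) + Mπ with hAμdef
    have hAμnn : 0 ≤ Aμ := add_nonneg (integral_nonneg fun y => dist_nonneg) hMπnn
    have key : ∑' n, ∫⁻ x, ‖F n x‖₊ ∂μ ≠ ∞ := by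
      have hbd : ∀ n, ∫⁻ x, ‖F n x‖₊ ∂μ ≤ ENNReal.ofReal (c n * Aμ) := by
        intro n
        have hin : Integrable (fun x => c n * (dist x x₀ + Mπ)) μ :=
          ((hDμ.add (integrable_const _)).const_mul _)
        calc ∫⁻ x, ‖F n x‖₊ ∂μ = ∫⁻ x, ENNReal.ofReal |F n x| ∂μ := by
              simp_rw [← enorm_eq_nnnorm, Real.enorm_eq_ofReal_abs]
          _ ≤ ∫⁻ x, ENNReal.ofReal (c n * (dist x x₀ + Mπ)) ∂μ :=
              lintegral_mono fun x => ENNReal.ofReal_le_ofReal (hFbd n x)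
          _ = ENNReal.ofReal (∫ x, c n * (dist x x₀ + Mπ) ∂μ) :=
              (ofReal_integral_eq_lintegral_ofReal hin
                (Eventually.of_forall fun x =>
                  mul_nonneg (hcnn n) (add_nonneg dist_nonneg hMπnn))).symm
          _ = ENNReal.ofReal (c n * Aμ) := by
              rw [integral_const_mul _ _, integral_add hDμ (integrable_const _), integral_const]
              simp [measure_univ, hAμdef]
      have h2 : ∑' n, ∫⁻ x, ‖F n x‖₊ ∂μ ≤ ∑' n, ENNReal.ofReal (c n * Aμ) :=
        ENNReal.tsum_le_tsum hbd
      have h3 : ∑' n, ENNReal.ofReal (c n * Aμ) = ENNReal.ofReal (∑' n, c n * Aμ) :=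
        (ENNReal.ofReal_tsum_of_nonneg (fun n => mul_nonneg (hcnn n) hAμnn)
          (hcsum.mul_right _)).symm
      rw [h3] at h2
      exact ne_top_of_le_ne_top ENNReal.ofReal_ne_top h2
    exact integral_tsum (fun n => (hFmeas n).aestronglyMeasurable) key
  have huzero : ∫ x, u x ∂π = 0 := by
    rw [tsum_int π inferInstance hmomπ]
    simp [hFpi]
  have hupois : ∀ x, u x - ∫ y, u y ∂(P x) = f x := by
    intro x
    have h1 : ∫ y, u y ∂(P x) = ∑' n, ∫ y, F n y ∂(P x) :=
      tsum_int (P x) inferInstance (hmom1 x)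
    have h2 : ∀ n, ∫ y, F n y ∂(P x) = F (n + 1) x := fun n =>
      (Tn_succ x₀ hinv hp hE htau hfm hlipf n x).symm
    have h3 : u x = F 0 x + ∑' n, F (n + 1) x := Summable.tsum_eq_zero_add (hFsum x)
    rw [h1, tsum_congr h2, h3, add_sub_cancel_right]
    exact hF0 f x
  have hMemu : MemL0 π u := ⟨humeas, ⟨Sc, hulip⟩, huint, huzero⟩
  -- the Lipschitz-norm bound
  have helipffin : elip f ≠ ∞ := by
    refine ne_top_of_le_ne_top ((ENNReal.ofReal_ne_top (r := L))) ?_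
    rw [elip]
    refine iSup_le fun a => iSup_le fun b => iSup_le fun hab => ?_
    exact ENNReal.div_le_of_le_mul (ofReal_lip hLnn hlipf a b)
  have hflipE : ∀ a b : X, ENNReal.ofReal |f a - f b| ≤ elip f * edist a b := by
    intro a b
    rcases eq_or_ne a b with rfl | hab
    · simp
    · have h1 : ENNReal.ofReal |f a - f b| / edist a b ≤ elip f := by
        rw [elip]
        exact le_iSup_of_le a (le_iSup_of_le b (le_iSup_of_le hab le_rfl))
      have he0 : edist a b ≠ 0 := (edist_pos.mpr hab).ne'
      calc ENNReal.ofReal |f a - f b|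
          = ENNReal.ofReal |f a - f b| / edist a b * edist a b := by
            rw [ENNReal.div_mul_cancel he0 (edist_ne_top a b)]
        _ ≤ elip f * edist a b := mul_le_mul_left h1 _
  have hFe : ∀ n (a b : X), ENNReal.ofReal |F n a - F n b| ≤
      tau (kpow P n) * (elip f * edist a b) := by
    intro n a b
    have h := Tn_elip (P := P) n hfm helipffin hflipE
      (fun x => integrable_kpow x₀ hinv hp hE htau hfm hlipf n x) a b
    calc ENNReal.ofReal |F n a - F n b| ≤ elip f * tau (kpow P n) * edist a b := h
      _ = tau (kpow P n) * (elip f * edist a b) := by ring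
  have helipu : elip u ≤ (∑' n : ℕ, tau (kpow P n)) * elip f := by
    rw [elip]
    refine iSup_le fun a => iSup_le fun b => iSup_le fun hab => ?_
    refine ENNReal.div_le_of_le_mul ?_
    have habs : Summable fun n => |F n a - F n b| :=
      Summable.of_nonneg_of_le (fun n => abs_nonneg _) (fun n => hlipF n a b)
        (hcsum.mul_right _)
    have hsub : u a - u b = ∑' n, (F n a - F n b) := ((hFsum a).tsum_sub (hFsum b)).symm
    calc ENNReal.ofReal |u a - u b| ≤ ENNReal.ofReal (∑' n, |F n a - F n b|) := by
          refine ENNReal.ofReal_le_ofReal ?_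
          rw [hsub]
          simpa [Real.norm_eq_abs] using norm_tsum_le_tsum_norm
            (by simpa [Real.norm_eq_abs] using habs :
              Summable fun n => ‖F n a - F n b‖)
      _ = ∑' n, ENNReal.ofReal |F n a - F n b| :=
          ENNReal.ofReal_tsum_of_nonneg (fun n => abs_nonneg _) habs
      _ ≤ ∑' n, tau (kpow P n) * (elip f * edist a b) :=
          ENNReal.tsum_le_tsum fun n => hFe n a b
      _ = (∑' n : ℕ, tau (kpow P n)) * (elip f * edist a b) := ENNReal.tsum_mul_right
      _ = (∑' n : ℕ, tau (kpow P n)) * elip f * edist a b := by ring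
  -- uniqueness
  refine ⟨u, ⟨hMemu, hupois⟩, helipu, ?_⟩
  rintro v ⟨⟨hvmeas, ⟨Lv, hLv⟩, hvint, hvzero⟩, hvpois⟩
  set w : X → ℝ := fun x => v x - u x with hw
  have hwmeas : Measurable w := hvmeas.sub humeas
  have hLvlip : ∀ a b, |v a - v b| ≤ |Lv| * dist a b := fun a b =>
    (hLv a b).trans (mul_le_mul_of_nonneg_right (le_abs_self _) dist_nonneg)
  set Lw : ℝ := |Lv| + Sc with hLwdef
  have hLwnn : 0 ≤ Lw := add_nonneg (abs_nonneg _) hScnn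
  have hwlip : ∀ a b, |w a - w b| ≤ Lw * dist a b := by
    intro a b
    have he : w a - w b = (v a - v b) - (u a - u b) := by rw [hw]; ring
    have h4 : |w a - w b| ≤ |v a - v b| + |u a - u b| := by
      rw [he]; exact abs_sub _ _
    have h5 := hLvlip a b
    have h6 := hulip a b
    rw [hLwdef, add_mul]
    linarith
  have hvintP : ∀ x, Integrable v (P x) := fun x =>
    integrable_of_lip x₀ hvmeas hLvlip (hmom1 x)
  have huintP : ∀ x, Integrable u (P x) := fun x =>
    integrable_of_lip x₀ humeas hulip (hmom1 x)
  have hwfix : ∀ x, ∫ y, w y ∂(P x) = w x := by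
    intro x
    have e1 := hvpois x
    have e2 := hupois x
    have e3 : ∫ y, w y ∂(P x) = (∫ y, v y ∂(P x)) - ∫ y, u y ∂(P x) := by
      rw [hw]
      exact integral_sub (hvintP x) (huintP x)
    rw [e3, hw]
    show (∫ y, v y ∂(P x)) - ∫ y, u y ∂(P x) = v x - u x
    linarith
  have hwTn : ∀ n x, Tn P n w x = w x := by
    intro n
    induction n with
    | zero => exact fun x => hF0 w x
    | succ n ih =>
        intro x
        rw [Tn_succ x₀ hinv hp hE htau hwmeas hwlip n x]
        rw [integral_congr_ae (Eventually.of_forall fun z => ih z)]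
        exact hwfix x
  have hweq : ∀ a b : X, w a = w b := by
    intro a b
    have hbd : ∀ n : ℕ, |w a - w b| ≤ Lw * (t ^ (n % m) * θ ^ (n / m)) * dist a b := by
      intro n
      have h := lipTn w Lw hLwnn hwmeas hwlip n a b
      rw [hwTn n a, hwTn n b] at h
      have e : Lw * (t ^ (n % m) * θ ^ (n / m)) * dist a b =
          Lw * t ^ (n % m) * θ ^ (n / m) * dist a b := by ring
      rw [e]
      exact h
    have hs : Summable fun n : ℕ => Lw * (t ^ (n % m) * θ ^ (n / m)) * dist a b :=
      (hcsum0.mul_left Lw).mul_right _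
    have hlim : Tendsto (fun n : ℕ => Lw * (t ^ (n % m) * θ ^ (n / m)) * dist a b)
        atTop (nhds 0) := hs.tendsto_atTop_zero
    have h0 : |w a - w b| ≤ 0 := ge_of_tendsto' hlim hbd
    have := abs_nonpos_iff.mp h0
    linarith [this]
  have hwzero : ∫ x, w x ∂π = 0 := by
    rw [hw]
    rw [integral_sub hvint huint, hvzero, huzero, sub_zero]
  have hwconst0 : ∀ x, w x = 0 := by
    intro x
    have hcongr : ∫ y, w y ∂π = ∫ _, w x ∂π :=
      integral_congr_ae (Eventually.of_forall fun y => hweq y x)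
    rw [hwzero, integral_const] at hcongr
    simp only [measure_univ, probReal_univ, ENNReal.toReal_one, one_smul] at hcongr
    exact hcongr.symm
  funext x
  have := hwconst0 x
  rw [hw] at this
  have : v x - u x = 0 := this
  linarith
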